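/- Let h : {1, 2, 3, …} → ℚ be any sequence, let G(q,s) = Σ_{n≥1} h_n qⁿ s^{2n−2}/(2n−2)! be the corresponding formal power series in ℚ[[q,s]], and let D = q·∂/∂q. Then the differential equation ∂/∂s (D²G) = 2s · (D²G) · (D³G) holds in ℚ[[q,s]] if and only if for every n ≥ 1 the recursion h_{n+1} = Σ_{l=1}^{n} ((2n−1)! · l² · (n+1−l)²) / ((2l−2)! · (2(n−l))! · (n+1)) · h_l · h_{n+1−l} holds. -/

import Mathlib

/-- The Euler-type derivation `D = q·∂/∂q` on `ℚ[[q,s]]`, where the variable `q`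
corresponds to the index `0` and `s` to the index `1`. -/
noncomputable def Dq (F : MvPowerSeries (Fin 2) ℚ) : MvPowerSeries (Fin 2) ℚ :=
  fun m => (m 0 : ℚ) * MvPowerSeries.coeff m F

/-- The formal partial derivative `∂/∂s` on `ℚ[[q,s]]`. -/
noncomputable def Ds (F : MvPowerSeries (Fin 2) ℚ) : MvPowerSeries (Fin 2) ℚ :=
  fun m => ((m 1 : ℚ) + 1) * MvPowerSeries.coeff (m + Finsupp.single 1 1) F

/-- The generating series `G(q,s) = Σ_{n ≥ 1} h_n qⁿ s^{2n−2}/(2n−2)!` in `ℚ[[q,s]]`. -/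
noncomputable def genSeries (h : ℕ → ℚ) : MvPowerSeries (Fin 2) ℚ :=
  fun m => if 1 ≤ m 0 ∧ m 1 = 2 * m 0 - 2
    then h (m 0) / ((2 * m 0 - 2).factorial : ℚ) else 0

section Aux

open Finset

private lemma fin2_ext {m m' : Fin 2 →₀ ℕ} (h0 : m 0 = m' 0) (h1 : m 1 = m' 1) : m = m' := by
  ext i
  fin_cases i
  · exact h0
  · exact h1

/-- auxiliary monomial exponent -/
private noncomputable def mk2 (a b : ℕ) : Fin 2 →₀ ℕ :=
  Finsupp.single 0 a + Finsupp.single 1 b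

private lemma mk2_apply0 (a b : ℕ) : mk2 a b 0 = a := by
  simp [mk2, Finsupp.single_apply]

private lemma mk2_apply1 (a b : ℕ) : mk2 a b 1 = b := by
  simp [mk2, Finsupp.single_apply]

private lemma coeff_genSeries (h : ℕ → ℚ) (p : Fin 2 →₀ ℕ) :
    MvPowerSeries.coeff p (genSeries h) =
      if 1 ≤ p 0 ∧ p 1 = 2 * p 0 - 2 then h (p 0) / ((2 * p 0 - 2).factorial : ℚ) else 0 :=
  rfl

private lemma coeff_Dq (F : MvPowerSeries (Fin 2) ℚ) (p : Fin 2 →₀ ℕ) :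
    MvPowerSeries.coeff p (Dq F) = (p 0 : ℚ) * MvPowerSeries.coeff p F := rfl

private lemma coeff_Ds (F : MvPowerSeries (Fin 2) ℚ) (p : Fin 2 →₀ ℕ) :
    MvPowerSeries.coeff p (Ds F) =
      ((p 1 : ℚ) + 1) * MvPowerSeries.coeff (p + Finsupp.single 1 1) F := rfl

private lemma coeff_A (h : ℕ → ℚ) (p : Fin 2 →₀ ℕ) :
    MvPowerSeries.coeff p (Dq (Dq (genSeries h))) =
      (p 0 : ℚ) ^ 2 *
        (if 1 ≤ p 0 ∧ p 1 = 2 * p 0 - 2 then h (p 0) / ((2 * p 0 - 2).factorial : ℚ) else 0) := by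
  rw [coeff_Dq, coeff_Dq, coeff_genSeries]; ring

private lemma coeff_B (h : ℕ → ℚ) (p : Fin 2 →₀ ℕ) :
    MvPowerSeries.coeff p (Dq (Dq (Dq (genSeries h)))) =
      (p 0 : ℚ) ^ 3 *
        (if 1 ≤ p 0 ∧ p 1 = 2 * p 0 - 2 then h (p 0) / ((2 * p 0 - 2).factorial : ℚ) else 0) := by
  rw [coeff_Dq, coeff_Dq, coeff_Dq, coeff_genSeries]; ring

/-- the sum appearing in the product coefficient -/
private noncomputable def prodSum (h : ℕ → ℚ) (n : ℕ) : ℚ :=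
  ∑ l ∈ Finset.Icc 1 n,
    ((l : ℚ) ^ 2 * (h l / ((2 * l - 2).factorial : ℚ))) *
      (((n + 1 - l : ℕ) : ℚ) ^ 3 * (h (n + 1 - l) / ((2 * (n + 1 - l) - 2).factorial : ℚ)))

private lemma coeff_A_mk2 (h : ℕ → ℚ) (a b : ℕ) :
    MvPowerSeries.coeff (mk2 a b) (Dq (Dq (genSeries h))) =
      (a : ℚ) ^ 2 * (if 1 ≤ a ∧ b = 2 * a - 2 then h a / ((2 * a - 2).factorial : ℚ) else 0) := by
  rw [coeff_A, mk2_apply0, mk2_apply1]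

private lemma coeff_B_mk2 (h : ℕ → ℚ) (a b : ℕ) :
    MvPowerSeries.coeff (mk2 a b) (Dq (Dq (Dq (genSeries h)))) =
      (a : ℚ) ^ 3 * (if 1 ≤ a ∧ b = 2 * a - 2 then h a / ((2 * a - 2).factorial : ℚ) else 0) := by
  rw [coeff_B, mk2_apply0, mk2_apply1]

private lemma nonzero_struct (h : ℕ → ℚ) (p : (Fin 2 →₀ ℕ) × (Fin 2 →₀ ℕ))
    (hf : MvPowerSeries.coeff p.1 (Dq (Dq (genSeries h))) *
      MvPowerSeries.coeff p.2 (Dq (Dq (Dq (genSeries h)))) ≠ 0) :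
    (1 ≤ p.1 0 ∧ p.1 1 = 2 * p.1 0 - 2) ∧ (1 ≤ p.2 0 ∧ p.2 1 = 2 * p.2 0 - 2) := by
  rw [coeff_A, coeff_B] at hf
  by_cases c1 : 1 ≤ p.1 0 ∧ p.1 1 = 2 * p.1 0 - 2
  · by_cases c2 : 1 ≤ p.2 0 ∧ p.2 1 = 2 * p.2 0 - 2
    · exact ⟨c1, c2⟩
    · rw [if_neg c2] at hf; simp at hf
  · rw [if_neg c1] at hf; simp at hf

private lemma coeff_prod (h : ℕ → ℚ) (m : Fin 2 →₀ ℕ) (n : ℕ) (hn : 1 ≤ n)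
    (h0 : m 0 = n + 1) (h1 : m 1 = 2 * n - 2) :
    MvPowerSeries.coeff m (Dq (Dq (genSeries h)) * Dq (Dq (Dq (genSeries h)))) =
      prodSum h n := by
  rw [MvPowerSeries.coeff_mul, prodSum]
  refine Finset.sum_bij_ne_zero (fun p _ _ => p.1 0) ?_ ?_ ?_ ?_
  · intro p hp hne
    rw [Finset.HasAntidiagonal.mem_antidiagonal] at hp
    obtain ⟨⟨c11, c12⟩, ⟨c21, c22⟩⟩ := nonzero_struct h p hne
    have e0 : p.1 0 + p.2 0 = n + 1 := by
      rw [← h0, ← hp]; simp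
    simp only [Finset.mem_Icc]
    omega
  · intro p₁ hp₁ hne₁ p₂ hp₂ hne₂ heq
    rw [Finset.HasAntidiagonal.mem_antidiagonal] at hp₁ hp₂
    obtain ⟨⟨a11, a12⟩, ⟨a21, a22⟩⟩ := nonzero_struct h p₁ hne₁
    obtain ⟨⟨b11, b12⟩, ⟨b21, b22⟩⟩ := nonzero_struct h p₂ hne₂
    have e1 : p₁.1 0 + p₁.2 0 = n + 1 := by rw [← h0, ← hp₁]; simp
    have e2 : p₂.1 0 + p₂.2 0 = n + 1 := by rw [← h0, ← hp₂]; simp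
    beta_reduce at heq
    have hfst : p₁.1 = p₂.1 := fin2_ext heq (by rw [a12, b12, heq])
    have hsnd : p₂.2 0 = p₁.2 0 := by omega
    exact Prod.ext hfst (fin2_ext hsnd.symm (by rw [a22, b22, hsnd]))
  · intro l hl hgl
    rw [Finset.mem_Icc] at hl
    refine ⟨(mk2 l (2 * l - 2), mk2 (n + 1 - l) (2 * (n + 1 - l) - 2)), ?_, ?_, ?_⟩
    · rw [Finset.HasAntidiagonal.mem_antidiagonal]
      refine fin2_ext ?_ ?_
      · simp only [Finsupp.add_apply, mk2_apply0, h0]; omega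
      · simp only [Finsupp.add_apply, mk2_apply1, h1]; omega
    · rw [coeff_A_mk2, coeff_B_mk2, if_pos ⟨hl.1, rfl⟩,
        if_pos ⟨show 1 ≤ n + 1 - l by omega, rfl⟩]
      intro hzero
      apply hgl
      rw [← hzero]
    · exact mk2_apply0 _ _
  · intro p hp hne
    rw [Finset.HasAntidiagonal.mem_antidiagonal] at hp
    obtain ⟨⟨c11, c12⟩, ⟨c21, c22⟩⟩ := nonzero_struct h p hne
    have e0 : p.1 0 + p.2 0 = n + 1 := by rw [← h0, ← hp]; simp
    have h2 : p.2 0 = n + 1 - p.1 0 := by omega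
    beta_reduce
    rw [coeff_A, coeff_B, if_pos ⟨c11, c12⟩, if_pos ⟨c21, c22⟩, h2]

private lemma coeff_prod_zero (h : ℕ → ℚ) (m : Fin 2 →₀ ℕ)
    (hm : ¬(2 ≤ m 0 ∧ m 1 = 2 * m 0 - 4)) :
    MvPowerSeries.coeff m (Dq (Dq (genSeries h)) * Dq (Dq (Dq (genSeries h)))) = 0 := by
  rw [MvPowerSeries.coeff_mul]
  refine Finset.sum_eq_zero fun p hp => ?_
  rw [Finset.HasAntidiagonal.mem_antidiagonal] at hp
  by_contra hne
  obtain ⟨⟨c11, c12⟩, ⟨c21, c22⟩⟩ := nonzero_struct h p hne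
  have e0 : p.1 0 + p.2 0 = m 0 := by rw [← hp]; simp
  have e1 : p.1 1 + p.2 1 = m 1 := by rw [← hp]; simp
  exact hm ⟨by omega, by omega⟩

end Aux

private noncomputable def prodTerm (h : ℕ → ℚ) (n l : ℕ) : ℚ :=
  ((l : ℚ) ^ 2 * (h l / ((2 * l - 2).factorial : ℚ))) *
    (((n + 1 - l : ℕ) : ℚ) ^ 3 * (h (n + 1 - l) / ((2 * (n + 1 - l) - 2).factorial : ℚ)))

private lemma prodSum_eq (h : ℕ → ℚ) (n : ℕ) :
    prodSum h n = ∑ l ∈ Finset.Icc 1 n, prodTerm h n l := rfl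

private noncomputable def recTerm (h : ℕ → ℚ) (n l : ℕ) : ℚ :=
  (((2 * n - 1).factorial : ℚ) * (l : ℚ) ^ 2 * ((n + 1 - l : ℕ) : ℚ) ^ 2) /
      (((2 * l - 2).factorial : ℚ) * ((2 * (n - l)).factorial : ℚ) * ((n : ℚ) + 1)) *
    h l * h (n + 1 - l)

private lemma per_term (h : ℕ → ℚ) (n l : ℕ) (hn : 1 ≤ n) (hl1 : 1 ≤ l) (hl2 : l ≤ n) :
    ((2 * n : ℕ) : ℚ) * ((n : ℚ) + 1) ^ 2 / ((2 * n).factorial : ℚ) * recTerm h n l =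
      prodTerm h n l + prodTerm h n (n + 1 - l) := by
  unfold recTerm prodTerm
  have e1 : n + 1 - (n + 1 - l) = l := by omega
  have e2 : 2 * (n + 1 - l) - 2 = 2 * (n - l) := by omega
  rw [e1, e2]
  have e3 : 2 * n * (2 * n - 1).factorial = (2 * n).factorial :=
    Nat.mul_factorial_pred (by omega)
  rw [← e3]
  have hle : l ≤ n + 1 := by omega
  rw [Nat.cast_sub hle]
  have f1 : ((2 * l - 2).factorial : ℚ) ≠ 0 := Nat.cast_ne_zero.mpr (Nat.factorial_ne_zero _)
  have f2 : ((2 * (n - l)).factorial : ℚ) ≠ 0 := Nat.cast_ne_zero.mpr (Nat.factorial_ne_zero _)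
  have f3 : ((2 * n - 1).factorial : ℚ) ≠ 0 := Nat.cast_ne_zero.mpr (Nat.factorial_ne_zero _)
  have f4 : ((n : ℚ) + 1) ≠ 0 := by positivity
  have f5 : ((2 * n : ℕ) : ℚ) ≠ 0 := by
    rw [Nat.cast_ne_zero]; omega
  push_cast
  field_simp
  ring

private lemma key (h : ℕ → ℚ) (n : ℕ) (hn : 1 ≤ n) :
    ((2 * n : ℕ) : ℚ) * ((n : ℚ) + 1) ^ 2 / ((2 * n).factorial : ℚ) *
        ∑ l ∈ Finset.Icc 1 n, recTerm h n l = 2 * prodSum h n := by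
  have hrefl : ∑ l ∈ Finset.Icc 1 n, prodTerm h n l
      = ∑ l ∈ Finset.Icc 1 n, prodTerm h n (n + 1 - l) := by
    refine Finset.sum_nbij' (fun l => n + 1 - l) (fun l => n + 1 - l) ?_ ?_ ?_ ?_ ?_
    · intro a ha; beta_reduce; simp only [Finset.mem_Icc] at *; omega
    · intro a ha; beta_reduce; simp only [Finset.mem_Icc] at *; omega
    · intro a ha; beta_reduce; simp only [Finset.mem_Icc] at ha; omega
    · intro a ha; beta_reduce; simp only [Finset.mem_Icc] at ha; omega
    · intro a ha
      beta_reduce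
      rw [Finset.mem_Icc] at ha
      have e1 : n + 1 - (n + 1 - a) = a := by omega
      unfold prodTerm
      rw [e1]
  rw [prodSum_eq, two_mul (∑ l ∈ Finset.Icc 1 n, prodTerm h n l)]
  nth_rewrite 2 [hrefl]
  rw [Finset.mul_sum, ← Finset.sum_add_distrib]
  refine Finset.sum_congr rfl fun l hl => ?_
  rw [Finset.mem_Icc] at hl
  exact per_term h n l hn hl.1 hl.2

private lemma eq_iff (h : ℕ → ℚ) (n : ℕ) (hn : 1 ≤ n) :
    ((2 * n : ℕ) : ℚ) * ((n : ℚ) + 1) ^ 2 * (h (n + 1) / ((2 * n).factorial : ℚ)) =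
        2 * prodSum h n ↔
      h (n + 1) = ∑ l ∈ Finset.Icc 1 n, recTerm h n l := by
  have hc : ((2 * n : ℕ) : ℚ) * ((n : ℚ) + 1) ^ 2 / ((2 * n).factorial : ℚ) ≠ 0 := by
    have f5 : (0 : ℚ) < ((2 * n : ℕ) : ℚ) := by
      rw [Nat.cast_pos]; omega
    have f6 : (0 : ℚ) < ((2 * n).factorial : ℚ) := by
      rw [Nat.cast_pos]; exact Nat.factorial_pos _
    have f4 : (0 : ℚ) < (n : ℚ) + 1 := by positivity
    positivity
  rw [← key h n hn]
  constructor
  · intro H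
    refine mul_left_cancel₀ hc ?_
    calc ((2 * n : ℕ) : ℚ) * ((n : ℚ) + 1) ^ 2 / ((2 * n).factorial : ℚ) * h (n + 1)
        = ((2 * n : ℕ) : ℚ) * ((n : ℚ) + 1) ^ 2 * (h (n + 1) / ((2 * n).factorial : ℚ)) := by
          ring
      _ = _ := H
  · intro H
    rw [H]; ring

private lemma coeff_rhs (h : ℕ → ℚ) (m : Fin 2 →₀ ℕ) :
    MvPowerSeries.coeff m
        (2 * MvPowerSeries.X 1 * Dq (Dq (genSeries h)) * Dq (Dq (Dq (genSeries h)))) =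
      if Finsupp.single 1 1 ≤ m then
        2 * MvPowerSeries.coeff (m - Finsupp.single 1 1)
          (Dq (Dq (genSeries h)) * Dq (Dq (Dq (genSeries h))))
      else 0 := by
  have hrw : 2 * MvPowerSeries.X 1 * Dq (Dq (genSeries h)) * Dq (Dq (Dq (genSeries h))) =
      MvPowerSeries.monomial (Finsupp.single 1 1) 1 *
        (Dq (Dq (genSeries h)) * Dq (Dq (Dq (genSeries h))) +
          Dq (Dq (genSeries h)) * Dq (Dq (Dq (genSeries h)))) := by
    rw [← MvPowerSeries.X_def]; ring
  rw [hrw, MvPowerSeries.coeff_monomial_mul]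
  split
  · rw [map_add]; ring
  · rfl

private lemma adds_apply0 (m : Fin 2 →₀ ℕ) :
    ((m + Finsupp.single 1 1 : Fin 2 →₀ ℕ)) 0 = m 0 := by
  simp [Finsupp.single_apply]

private lemma adds_apply1 (m : Fin 2 →₀ ℕ) :
    ((m + Finsupp.single 1 1 : Fin 2 →₀ ℕ)) 1 = m 1 + 1 := by
  simp

private lemma subs_apply0 (m : Fin 2 →₀ ℕ) :
    ((m - Finsupp.single 1 1 : Fin 2 →₀ ℕ)) 0 = m 0 := by
  simp [Finsupp.tsub_apply, Finsupp.single_apply]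

private lemma subs_apply1 (m : Fin 2 →₀ ℕ) :
    ((m - Finsupp.single 1 1 : Fin 2 →₀ ℕ)) 1 = m 1 - 1 := by
  simp [Finsupp.tsub_apply]

/-- The per-coefficient statement of the differential equation. -/
private lemma coeff_eq_iff (h : ℕ → ℚ) (m : Fin 2 →₀ ℕ) :
    MvPowerSeries.coeff m (Ds (Dq (Dq (genSeries h)))) =
        MvPowerSeries.coeff m
          (2 * MvPowerSeries.X 1 * Dq (Dq (genSeries h)) * Dq (Dq (Dq (genSeries h)))) ↔
      (2 ≤ m 0 ∧ m 1 = 2 * m 0 - 3 →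
        h (m 0) = ∑ l ∈ Finset.Icc 1 (m 0 - 1), recTerm h (m 0 - 1) l) := by
  rw [coeff_Ds, coeff_A, coeff_rhs, adds_apply0, adds_apply1]
  by_cases hm : 2 ≤ m 0 ∧ m 1 = 2 * m 0 - 3
  · obtain ⟨h2, h3⟩ := hm
    set n := m 0 - 1 with hndef
    have hn : 1 ≤ n := by omega
    have h0 : m 0 = n + 1 := by omega
    have h1 : m 1 = 2 * n - 1 := by omega
    have hle : Finsupp.single 1 1 ≤ m := Finsupp.single_le_iff.mpr (by omega)
    rw [if_pos hle,
      coeff_prod h (m - Finsupp.single 1 1) n hn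
        (by rw [subs_apply0]; exact h0) (by rw [subs_apply1]; omega),
      if_pos ⟨by omega, by omega⟩, h0, h1]
    rw [show 2 * (n + 1) - 2 = 2 * n from by omega]
    have hcast : ((2 * n - 1 : ℕ) : ℚ) + 1 = ((2 * n : ℕ) : ℚ) := by
      rw [Nat.cast_sub (by omega : 1 ≤ 2 * n)]
      push_cast
      ring
    rw [hcast]
    constructor
    · intro H
      intro _
      refine (eq_iff h n hn).1 ?_
      rw [← H]; push_cast; ring
    · intro H
      have := (eq_iff h n hn).2 (H ⟨by omega, by omega⟩)
      rw [← this]; push_cast; ring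
  · have hiff : ¬(1 ≤ m 0 ∧ m 1 + 1 = 2 * m 0 - 2) := by omega
    rw [if_neg hiff, mul_zero, mul_zero]
    constructor
    · intro _ hcond; exact absurd hcond hm
    · intro _
      split
      · rename_i hle
        have hle1 : 1 ≤ m 1 := by
          have := Finsupp.single_le_iff.mp hle
          omega
        rw [coeff_prod_zero h _ (by rw [subs_apply0, subs_apply1]; omega), mul_zero]
      · rfl

theorem trr_CP1_iff_recursion (h : ℕ → ℚ) :
    Ds (Dq (Dq (genSeries h))) =
        2 * MvPowerSeries.X 1 * Dq (Dq (genSeries h)) * Dq (Dq (Dq (genSeries h))) ↔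
      ∀ n : ℕ, 1 ≤ n →
        h (n + 1) = ∑ l ∈ Finset.Icc 1 n,
          (((2 * n - 1).factorial : ℚ) * (l : ℚ) ^ 2 * ((n + 1 - l : ℕ) : ℚ) ^ 2) /
              (((2 * l - 2).factorial : ℚ) * ((2 * (n - l)).factorial : ℚ) * ((n : ℚ) + 1)) *
            h l * h (n + 1 - l) := by
  constructor
  · intro H n hn
    have hc : MvPowerSeries.coeff (mk2 (n + 1) (2 * n - 1)) (Ds (Dq (Dq (genSeries h)))) =
        MvPowerSeries.coeff (mk2 (n + 1) (2 * n - 1))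
          (2 * MvPowerSeries.X 1 * Dq (Dq (genSeries h)) * Dq (Dq (Dq (genSeries h)))) := by
      rw [H]
    have := (coeff_eq_iff h (mk2 (n + 1) (2 * n - 1))).1 hc
    rw [mk2_apply0, mk2_apply1] at this
    have h2 := this ⟨by omega, by omega⟩
    rw [show n + 1 - 1 = n from by omega] at h2
    unfold recTerm at h2
    exact h2
  · intro H
    apply MvPowerSeries.ext
    intro m
    refine (coeff_eq_iff h m).2 ?_
    rintro ⟨h2, h3⟩
    have := H (m 0 - 1) (by omega)
    rw [show m 0 - 1 + 1 = m 0 from by omega] at this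
    unfold recTerm
    rw [show m 0 - 1 + 1 = m 0 from by omega]
    exact this
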